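/- arXiv:1511.07151 — 2 statements merged into one kernel-verified Lean document; each statement's English description precedes it below -/
import Mathlib

section
/- For each fixed l ∈ ℕ₀, the map k ↦ u(l) + u(k) permutes the set {u(k) : k ∈ ℕ₀}, i.e. {u(l) + u(k) : k ∈ ℕ₀} = {u(k) : k ∈ ℕ₀}. -/
theorem digit_lt_aux (b N : ℕ) (e : ℕ → ℕ) (he : ∀ i < N, e i < b) :
    (∑ i ∈ Finset.range N, e i * b ^ i) < b ^ N := by
  induction N with
  | zero => simp
  | succ N ih =>
    rw [Finset.sum_range_succ]
    have h1 : (∑ i ∈ Finset.range N, e i * b ^ i) < b ^ N :=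
      ih (fun i hi => he i (hi.trans (Nat.lt_succ_self N)))
    have h2 : e N + 1 ≤ b := he N (Nat.lt_succ_self N)
    calc (∑ i ∈ Finset.range N, e i * b ^ i) + e N * b ^ N
        < b ^ N + e N * b ^ N := by omega
      _ = (e N + 1) * b ^ N := by ring
      _ ≤ b * b ^ N := Nat.mul_le_mul_right _ h2
      _ = b ^ (N + 1) := by ring

theorem digit_eq_aux (b N : ℕ) (hb : 0 < b) (e : ℕ → ℕ) (he : ∀ i < N, e i < b)
    (j : ℕ) (hj : j < N) :
    (∑ i ∈ Finset.range N, e i * b ^ i) / b ^ j % b = e j := by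
  have hsplit : (∑ i ∈ Finset.range N, e i * b ^ i)
      = (∑ i ∈ Finset.range j, e i * b ^ i)
        + b ^ j * ∑ i ∈ Finset.range (N - j), e (j + i) * b ^ i := by
    rw [Finset.mul_sum]
    rw [← Finset.sum_range_add_sum_Ico _ hj.le]
    congr 1
    rw [Finset.sum_Ico_eq_sum_range]
    apply Finset.sum_congr rfl
    intro i _
    rw [pow_add]; ring
  have hsmall : (∑ i ∈ Finset.range j, e i * b ^ i) < b ^ j :=
    digit_lt_aux b j e (fun i hi => he i (hi.trans hj))
  rw [hsplit, Nat.add_mul_div_left _ _ (Nat.pow_pos hb),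
    Nat.div_eq_of_lt hsmall, zero_add]
  have hNj : N - j = (N - j - 1) + 1 := by omega
  rw [hNj, Finset.sum_range_succ']
  simp only [pow_zero, mul_one, add_zero]
  have : (∑ i ∈ Finset.range (N - j - 1), e (j + (i + 1)) * b ^ (i + 1))
      = b * ∑ i ∈ Finset.range (N - j - 1), e (j + (i + 1)) * b ^ i := by
    rw [Finset.mul_sum]; apply Finset.sum_congr rfl; intro i _; ring
  rw [this, Nat.mul_add_mod]
  exact Nat.mod_eq_of_lt (he j hj)

/-- For the standard digit-wise enumeration `u : ℕ → K` of coset representatives of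
`O` in `K⁺` over a local field `K` of characteristic `p`, for each fixed `l ∈ ℕ` the
map `k ↦ u l + u k` permutes the set `{u k : k ∈ ℕ}`:
`{u l + u k : k ∈ ℕ} = {u k : k ∈ ℕ}`. -/
theorem standard_enumeration_add
    (K : Type*) [Field K]
    (p c q : ℕ) (hp : p.Prime) (hc : 0 < c) (hq : q = p ^ c)
    [CharP K p]
    (𝔭 : K) (h𝔭 : 𝔭 ≠ 0)
    (ε : Fin c → K)
    (u : ℕ → K)
    (ubase : ∀ m < q, u m = (∑ k : Fin c, ((m / p ^ (k : ℕ)) % p : ℕ) * ε k) * 𝔭⁻¹)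
    (hdig : ∀ n : ℕ, u n = ∑ k ∈ Finset.range (n + 1),
      u (n / q ^ k % q) * 𝔭 ^ (-(k : ℤ)))
    (l : ℕ) :
    (Set.range fun k => u l + u k) = Set.range u := by
  have hp0 : 0 < p := hp.pos
  have hp2 : 2 ≤ p := hp.two_le
  have hq2 : 2 ≤ q := by
    rw [hq]
    calc 2 ≤ p := hp2
      _ = p ^ 1 := (pow_one p).symm
      _ ≤ p ^ c := Nat.pow_le_pow_right hp0 hc
  have hq0 : 0 < q := by omega
  -- cast mod p lemma
  have castmod : ∀ a : ℕ, ((a % p : ℕ) : K) = (a : K) := by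
    intro a
    conv_rhs => rw [← Nat.div_add_mod a p]
    push_cast
    rw [CharP.cast_eq_zero K p]
    ring
  have u0 : u 0 = 0 := by
    rw [ubase 0 hq0]
    simp
  -- digit-wise add within one base-q digit
  set A : ℕ → ℕ → ℕ := fun a b =>
    ∑ i ∈ Finset.range c, ((a / p ^ i % p + b / p ^ i % p) % p) * p ^ i with hA
  have hAlt : ∀ a b, A a b < q := by
    intro a b
    rw [hq]
    exact digit_lt_aux p c _ (fun i _ => Nat.mod_lt _ hp0)
  have hAdig : ∀ a b, ∀ i < c,
      A a b / p ^ i % p = (a / p ^ i % p + b / p ^ i % p) % p := by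
    intro a b i hi
    exact digit_eq_aux p c hp0 _ (fun i _ => Nat.mod_lt _ hp0) i hi
  have huA : ∀ a, a < q → ∀ b, b < q → u (A a b) = u a + u b := by
    intro a ha b hb
    rw [ubase _ (hAlt a b), ubase a ha, ubase b hb, ← add_mul, ← Finset.sum_add_distrib]
    congr 1
    apply Finset.sum_congr rfl
    intro k _
    rw [hAdig a b k k.2, castmod]
    push_cast
    ring
  -- digit-wise negation within one base-q digit
  set Ng : ℕ → ℕ := fun a =>
    ∑ i ∈ Finset.range c, ((p - a / p ^ i % p) % p) * p ^ i with hNg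
  have hNglt : ∀ a, Ng a < q := by
    intro a
    rw [hq]
    exact digit_lt_aux p c _ (fun i _ => Nat.mod_lt _ hp0)
  have huN : ∀ a, a < q → u (Ng a) = - u a := by
    intro a ha
    rw [ubase _ (hNglt a), ubase a ha, ← neg_mul, ← Finset.sum_neg_distrib]
    congr 1
    apply Finset.sum_congr rfl
    intro k _
    have hdg : Ng a / p ^ (k : ℕ) % p = (p - a / p ^ (k : ℕ) % p) % p :=
      digit_eq_aux p c hp0 _ (fun i _ => Nat.mod_lt _ hp0) k k.2
    have hle : a / p ^ (k : ℕ) % p ≤ p := (Nat.mod_lt _ hp0).le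
    rw [hdg, castmod, Nat.cast_sub hle, CharP.cast_eq_zero K p]
    ring
  -- u evaluated via any sufficiently long digit expansion
  have u_eq : ∀ n N, n < q ^ N →
      u n = ∑ j ∈ Finset.range N, u (n / q ^ j % q) * 𝔭 ^ (-(j : ℤ)) := by
    intro n N hN
    have hz : ∀ j : ℕ, n < q ^ j → u (n / q ^ j % q) * 𝔭 ^ (-(j : ℤ)) = 0 := by
      intro j hj
      rw [Nat.div_eq_of_lt hj, Nat.zero_mod, u0, zero_mul]
    have hself : ∀ j : ℕ, n + 1 ≤ j → n < q ^ j := by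
      intro j hj
      calc n < q ^ n := Nat.lt_pow_self hq2
        _ ≤ q ^ j := Nat.pow_le_pow_right hq0 (by omega)
    set M := max (n + 1) N with hM
    have e1 : (∑ j ∈ Finset.range (n + 1), u (n / q ^ j % q) * 𝔭 ^ (-(j : ℤ)))
        = ∑ j ∈ Finset.range M, u (n / q ^ j % q) * 𝔭 ^ (-(j : ℤ)) := by
      apply Finset.sum_subset (Finset.range_subset_range.2 (le_max_left _ _))
      intro j _ hj
      rw [Finset.mem_range, not_lt] at hj
      exact hz j (hself j hj)
    have e2 : (∑ j ∈ Finset.range N, u (n / q ^ j % q) * 𝔭 ^ (-(j : ℤ)))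
        = ∑ j ∈ Finset.range M, u (n / q ^ j % q) * 𝔭 ^ (-(j : ℤ)) := by
      apply Finset.sum_subset (Finset.range_subset_range.2 (le_max_right _ _))
      intro j _ hj
      rw [Finset.mem_range, not_lt] at hj
      exact hz j (lt_of_lt_of_le hN (Nat.pow_le_pow_right hq0 hj))
    rw [hdig n, e1, e2]
  -- combined: u of digit-wise sum of two digit sequences
  have key : ∀ (a b : ℕ → ℕ) (N : ℕ), (∀ j, a j < q) → (∀ j, b j < q) →
      u (∑ j ∈ Finset.range N, A (a j) (b j) * q ^ j)
        = ∑ j ∈ Finset.range N, (u (a j) + u (b j)) * 𝔭 ^ (-(j : ℤ)) := by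
    intro a b N ha hb
    have hlt : (∑ j ∈ Finset.range N, A (a j) (b j) * q ^ j) < q ^ N :=
      digit_lt_aux q N _ (fun j _ => hAlt _ _)
    rw [u_eq _ N hlt]
    apply Finset.sum_congr rfl
    intro j hj
    rw [Finset.mem_range] at hj
    rw [digit_eq_aux q N hq0 _ (fun i _ => hAlt _ _) j hj, huA _ (ha j) _ (hb j)]
  have hdlt : ∀ n j, n / q ^ j % q < q := fun n j => Nat.mod_lt _ hq0
  have hself : ∀ n N, n < N + 1 → n < q ^ N := by
    intro n N hn
    calc n < q ^ n := Nat.lt_pow_self hq2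
      _ ≤ q ^ N := Nat.pow_le_pow_right hq0 (by omega)
  ext x
  simp only [Set.mem_range]
  constructor
  · rintro ⟨k, rfl⟩
    set N := max l k + 1 with hN
    refine ⟨∑ j ∈ Finset.range N, A (l / q ^ j % q) (k / q ^ j % q) * q ^ j, ?_⟩
    rw [key _ _ N (hdlt l) (hdlt k)]
    rw [u_eq l N (hself l N (by omega)), u_eq k N (hself k N (by omega)),
      ← Finset.sum_add_distrib]
    apply Finset.sum_congr rfl
    intro j _
    ring
  · rintro ⟨n, rfl⟩
    set N := max l n + 1 with hN
    refine ⟨∑ j ∈ Finset.range N, A (Ng (l / q ^ j % q)) (n / q ^ j % q) * q ^ j, ?_⟩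
    rw [key _ _ N (fun j => hNglt _) (hdlt n)]
    have : (∑ j ∈ Finset.range N, (u (Ng (l / q ^ j % q)) + u (n / q ^ j % q))
        * 𝔭 ^ (-(j : ℤ)))
        = - u l + u n := by
      rw [u_eq l N (hself l N (by omega)), u_eq n N (hself n N (by omega)),
        ← Finset.sum_neg_distrib, ← Finset.sum_add_distrib]
      apply Finset.sum_congr rfl
      intro j _
      rw [huN _ (hdlt l j)]
      ring
    rw [this]
    ring
end

section
/- The union W = ∪_{i=1}^{q−1} (O + u(i)) is a multiwavelet set of order q−1 in K: {𝔭^j W : j ∈ ℤ} is a measurable partition of K, and for each 1 ≤ i ≤ q−1, {O + u(i) + u(k) : k ∈ ℕ₀} is a measurable partition of K. In particular |W| = q − 1 and every ξ ∈ W satisfies |ξ| = q. -/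
open MeasureTheory

/-- The union `W = ∪_{i=1}^{q-1} (O + u i)` is a multiwavelet set of order `q - 1` in a
local field `K`: `{𝔭^j W : j ∈ ℤ}` is a measurable partition of `K`, and for each
`1 ≤ i ≤ q-1`, `{O + u i + u k : k ∈ ℕ}` is a measurable partition of `K`.
In particular `|W| = q - 1` and every `ξ ∈ W` satisfies `v ξ = q`. -/
theorem shannon_multiwavelet_set
    (K : Type*) [Field K] [MeasurableSpace K]
    (v : K → ℝ)
    (hv0 : ∀ x : K, v x = 0 ↔ x = 0)
    (hvm : ∀ x y : K, v (x * y) = v x * v y)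
    (hvu : ∀ x y : K, v (x + y) ≤ max (v x) (v y))
    (hvnn : ∀ x : K, 0 ≤ v x)
    (q : ℕ) (hq : 1 < q)
    (𝔭 : K) (h𝔭 : v 𝔭 = (q : ℝ)⁻¹)
    (O : Set K) (hOdef : O = {x : K | v x ≤ 1}) (hOmeas : MeasurableSet O)
    (μ : Measure K)
    (htrans : ∀ (a : K) (s : Set K), μ ((a + ·) '' s) = μ s)
    (hscale : ∀ s : Set K, μ ((𝔭 * ·) '' s) = ((q : ENNReal))⁻¹ * μ s)
    (hO : μ O = 1)
    (u : ℕ → K) (hu0 : u 0 = 0)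
    (hunorm : ∀ n, 0 < n → n < q → v (u n) = (q : ℝ))
    (hu : ∀ x : K, ∃! n : ℕ, x - u n ∈ O)
    (hadd : ∀ l k : ℕ, ∃ m : ℕ, u l + u k = u m) :
    -- `{𝔭^j W : j ∈ ℤ}` is a measurable partition of `K`
    ((Pairwise fun j j' : ℤ =>
        μ (((𝔭 ^ j * ·) '' ⋃ i ∈ Finset.Ico 1 q, (· + u i) '' O) ∩
           ((𝔭 ^ j' * ·) '' ⋃ i ∈ Finset.Ico 1 q, (· + u i) '' O)) = 0) ∧
      μ (Set.univ \ ⋃ j : ℤ, (𝔭 ^ j * ·) '' ⋃ i ∈ Finset.Ico 1 q, (· + u i) '' O) = 0) ∧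
    -- for each `1 ≤ i ≤ q - 1`, `{O + u i + u k : k ∈ ℕ}` is a measurable partition of `K`
    (∀ i : ℕ, 1 ≤ i → i < q →
      (Pairwise fun k k' : ℕ =>
          μ (((· + u k) '' ((· + u i) '' O)) ∩ ((· + u k') '' ((· + u i) '' O))) = 0) ∧
        μ (Set.univ \ ⋃ k : ℕ, (· + u k) '' ((· + u i) '' O)) = 0) ∧
    -- `|W| = q - 1`
    μ (⋃ i ∈ Finset.Ico 1 q, (· + u i) '' O) = (q : ENNReal) - 1 ∧
    -- every `ξ ∈ W` has `v ξ = q`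
    ∀ ξ ∈ ⋃ i ∈ Finset.Ico 1 q, (· + u i) '' O, v ξ = (q : ℝ) := by
  -- numeric facts
  have hq0 : 0 < q := lt_trans one_pos hq
  have hq1R : (1:ℝ) < (q:ℝ) := by exact_mod_cast hq
  have hqR0 : (0:ℝ) < (q:ℝ) := by positivity
  have hqE0 : (q : ENNReal) ≠ 0 := by exact_mod_cast hq0.ne'
  have hqEtop : (q : ENNReal) ≠ ⊤ := ENNReal.natCast_ne_top q
  -- basic facts about v
  have hv0' : v 0 = 0 := (hv0 0).mpr rfl
  have hv1 : v 1 = 1 := by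
    have h := hvm 1 1
    rw [one_mul] at h
    have h1 : v 1 ≠ 0 := fun h0 => one_ne_zero ((hv0 1).mp h0)
    exact mul_left_cancel₀ h1 (by rw [mul_one, ← h])
  have hvneg : ∀ x : K, v (-x) = v x := by
    have hm1 : v (-1 : K) = 1 := by
      have h := hvm (-1) (-1)
      rw [neg_mul_neg, one_mul, hv1] at h
      have h2 : (v (-1:K) - 1) * (v (-1:K) + 1) = 0 := by nlinarith [h]
      rcases mul_eq_zero.mp h2 with h3 | h3
      · linarith
      · linarith [hvnn (-1:K)]
    intro x
    calc v (-x) = v ((-1) * x) := by rw [neg_one_mul]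
    _ = v (-1) * v x := hvm _ _
    _ = v x := by rw [hm1, one_mul]
  have hsharp : ∀ x y : K, v y < v x → v (x + y) = v x := by
    intro x y hlt
    have h1 : v (x + y) ≤ v x := le_trans (hvu x y) (le_of_eq (max_eq_left hlt.le))
    rcases lt_or_eq_of_le h1 with h2 | h2
    · exfalso
      have h4 : v x ≤ max (v (x + y)) (v y) := by
        have h5 := hvu (x + y) (-y)
        rwa [add_neg_cancel_right, hvneg] at h5
      have h6 : max (v (x + y)) (v y) < v x := max_lt h2 hlt
      linarith
    · exact h2
  have h𝔭0 : 𝔭 ≠ 0 := by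
    intro h
    rw [h, hv0'] at h𝔭
    have : (0:ℝ) < (q:ℝ)⁻¹ := by positivity
    linarith [h𝔭 ▸ this]
  have hvinv : ∀ x : K, x ≠ 0 → v x⁻¹ = (v x)⁻¹ := by
    intro x hx
    have h2 : v x ≠ 0 := fun h => hx ((hv0 x).mp h)
    have h1 : v x * v x⁻¹ = 1 := by rw [← hvm, mul_inv_cancel₀ hx, hv1]
    calc v x⁻¹ = (v x)⁻¹ * (v x * v x⁻¹) := by
          rw [← mul_assoc, inv_mul_cancel₀ h2, one_mul]
    _ = (v x)⁻¹ := by rw [h1, mul_one]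
  have hvpow : ∀ n : ℕ, v (𝔭 ^ n) = ((q:ℝ))⁻¹ ^ n := by
    intro n
    induction n with
    | zero => simpa using hv1
    | succ n ih => rw [pow_succ, pow_succ, hvm, ih, h𝔭]
  have hvzpow : ∀ j : ℤ, v (𝔭 ^ j) = (q:ℝ) ^ (-j) := by
    intro j
    rcases j with n | n
    · rw [Int.ofNat_eq_coe, zpow_natCast, hvpow, zpow_neg, zpow_natCast, inv_pow]
    · rw [zpow_negSucc, hvinv _ (pow_ne_zero _ h𝔭0), hvpow, inv_pow, inv_inv]
      have e : -Int.negSucc n = ((n+1 : ℕ) : ℤ) := by rw [Int.negSucc_eq]; push_cast; ring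
      rw [e, zpow_natCast]
  have hmemO : ∀ x : K, x ∈ O ↔ v x ≤ 1 := fun x => by rw [hOdef]; rfl
  have h0O : (0:K) ∈ O := (hmemO 0).mpr (by rw [hv0']; linarith)
  -- translation invariance in the right-translation form
  have htrans' : ∀ (a : K) (s : Set K), μ ((· + a) '' s) = μ s := by
    intro a s
    have h : (fun x : K => x + a) = (fun x : K => a + x) := by funext x; exact add_comm x a
    rw [h]
    exact htrans a s
  have hcoset : ∀ c : K, μ ((· + c) '' O) = 1 := fun c => by rw [htrans', hO]
  -- Caratheodory property of translates of O
  have hCar : ∀ (c : K) (A : Set K), μ (A ∩ (· + c) '' O) + μ (A \ (· + c) '' O) = μ A := by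
    intro c A
    have hinj : Function.Injective (fun x : K => x + c) := add_left_injective c
    set A' : Set K := (· + (-c)) '' A with hA'
    have himg : (· + c) '' A' = A := by
      rw [hA', Set.image_image]
      simp only [neg_add_cancel_right]
      exact Set.image_id A
    have h1 : A ∩ (· + c) '' O = (· + c) '' (A' ∩ O) := by
      rw [Set.image_inter hinj, himg]
    have h2 : A \ (· + c) '' O = (· + c) '' (A' \ O) := by
      rw [Set.image_diff hinj, himg]
    rw [h1, h2, htrans', htrans', measure_inter_add_diff A' hOmeas, hA', htrans']
  -- injectivity of u
  have huinj : ∀ a b : ℕ, u a = u b → a = b := by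
    intro a b hab
    have h1 : u a - u a ∈ O := by simpa using h0O
    have h2 : u a - u b ∈ O := by rw [hab]; simpa using h0O
    exact (hu (u a)).unique h1 h2
  -- cosets are pairwise disjoint
  have hdisj : ∀ m n : ℕ, m ≠ n → ((· + u m) '' O) ∩ ((· + u n) '' O) = ∅ := by
    intro m n hmn
    rw [Set.eq_empty_iff_forall_notMem]
    rintro x ⟨⟨y, hy, rfl⟩, ⟨z, hz, hzx⟩⟩
    apply hmn
    have h1 : (y + u m) - u m ∈ O := by simpa using hy
    have h2 : (y + u m) - u n ∈ O := by
      have hzx' : z + u n = y + u m := hzx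
      rw [← hzx']
      simpa using hz
    exact (hu _).unique h1 h2
  -- measure of a finite disjoint union of cosets
  have hcard : ∀ F : Finset ℕ, μ (⋃ i ∈ F, (· + u i) '' O) = F.card := by
    intro F
    induction F using Finset.induction_on with
    | empty => simp
    | @insert a s ha ih =>
      rw [Finset.set_biUnion_insert]
      set X : Set K := (· + u a) '' O with hX
      set Y : Set K := ⋃ i ∈ s, (· + u i) '' O with hY
      have hYX : Y ∩ X = ∅ := by
        rw [Set.eq_empty_iff_forall_notMem]
        rintro x ⟨hx1, hx2⟩
        rw [hY, Set.mem_iUnion₂] at hx1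
        obtain ⟨i, hi, hxi⟩ := hx1
        have hia : i ≠ a := fun h => ha (h ▸ hi)
        have hd := hdisj i a hia
        rw [Set.eq_empty_iff_forall_notMem] at hd
        exact hd x ⟨hxi, hx2⟩
      have hc := hCar (u a) (X ∪ Y)
      have e1 : (X ∪ Y) ∩ X = X := Set.union_inter_cancel_left
      have e2 : (X ∪ Y) \ X = Y := by
        rw [Set.union_diff_left]
        ext x
        constructor
        · rintro ⟨h1, -⟩; exact h1
        · intro h1
          refine ⟨h1, fun h2 => ?_⟩
          rw [Set.eq_empty_iff_forall_notMem] at hYX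
          exact hYX x ⟨h1, h2⟩
      rw [← hX] at hc
      rw [e1, e2] at hc
      rw [← hc, ih, hX, hcoset, Finset.card_insert_of_notMem ha]
      push_cast
      ring
  -- the ball of radius q
  have hballim : (𝔭 * ·) '' {x : K | v x ≤ (q:ℝ)} = O := by
    ext y
    constructor
    · rintro ⟨x, hx, rfl⟩
      rw [hmemO, hvm, h𝔭]
      rw [Set.mem_setOf_eq] at hx
      have h1 : (q:ℝ)⁻¹ * v x ≤ (q:ℝ)⁻¹ * q := mul_le_mul_of_nonneg_left hx (by positivity)
      rw [inv_mul_cancel₀ hqR0.ne'] at h1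
      exact h1
    · intro hy
      refine ⟨𝔭⁻¹ * y, ?_, mul_inv_cancel_left₀ h𝔭0 y⟩
      rw [Set.mem_setOf_eq, hvm, hvinv 𝔭 h𝔭0, h𝔭, inv_inv]
      have h1 : v y ≤ 1 := (hmemO y).mp hy
      nlinarith [hvnn y]
  have hball : μ {x : K | v x ≤ (q:ℝ)} = q := by
    have h := hscale {x : K | v x ≤ (q:ℝ)}
    rw [hballim, hO] at h
    have h2 := congrArg (fun t => (q:ENNReal) * t) h
    rw [← mul_assoc, ENNReal.mul_inv_cancel hqE0 hqEtop, one_mul, mul_one] at h2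
    exact h2.symm
  -- the key finiteness fact: reps inside the ball have index < q
  have key : ∀ n : ℕ, v (u n) ≤ (q:ℝ) → n < q := by
    intro n hn
    by_contra hnq
    push_neg at hnq
    have hna : n ∉ Finset.range q := by simp; omega
    have hsub : (⋃ i ∈ insert n (Finset.range q), (· + u i) '' O) ⊆ {x : K | v x ≤ (q:ℝ)} := by
      intro x hx
      rw [Set.mem_iUnion₂] at hx
      obtain ⟨i, hi, y, hy, rfl⟩ := hx
      rw [Set.mem_setOf_eq]
      have hyv : v y ≤ 1 := (hmemO y).mp hy
      have hui : v (u i) ≤ (q:ℝ) := by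
        rw [Finset.mem_insert] at hi
        rcases hi with rfl | hi
        · exact hn
        · rw [Finset.mem_range] at hi
          rcases Nat.eq_zero_or_pos i with rfl | hipos
          · rw [hu0, hv0']; positivity
          · rw [hunorm i hipos hi]
      exact le_trans (hvu y (u i)) (max_le (le_trans hyv (le_of_lt hq1R)) hui)
    have hle := le_trans (le_of_eq (hcard (insert n (Finset.range q))).symm)
      (le_trans (measure_mono hsub) (le_of_eq hball))
    rw [Finset.card_insert_of_notMem hna, Finset.card_range, Nat.cast_add, Nat.cast_one] at hle
    have hlt : (q:ENNReal) < (q:ENNReal) + 1 := ENNReal.lt_add_right hqEtop one_ne_zero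
    exact absurd hle (not_le.mpr hlt)
  -- abbreviate W
  set W : Set K := ⋃ i ∈ Finset.Ico 1 q, (· + u i) '' O with hWdef
  -- every element of W has valuation q
  have hWval : ∀ ξ ∈ W, v ξ = (q:ℝ) := by
    intro ξ hξ
    rw [hWdef, Set.mem_iUnion₂] at hξ
    obtain ⟨i, hi, y, hy, rfl⟩ := hξ
    rw [Finset.mem_Ico] at hi
    have hyv : v y ≤ 1 := (hmemO y).mp hy
    have hui : v (u i) = (q:ℝ) := hunorm i hi.1 hi.2
    have hs := hsharp (u i) y (by rw [hui]; linarith)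
    show v (y + u i) = (q:ℝ)
    rw [add_comm y (u i), hs, hui]
  -- W is exactly the shell 1 < v ≤ q
  have hWeq : W = {x : K | 1 < v x ∧ v x ≤ (q:ℝ)} := by
    apply Set.Subset.antisymm
    · intro x hx
      have h := hWval x hx
      rw [Set.mem_setOf_eq, h]
      exact ⟨hq1R, le_refl _⟩
    · rintro x ⟨hx1, hx2⟩
      obtain ⟨n, hn, -⟩ := hu x
      have hxn : v (x - u n) ≤ 1 := (hmemO _).mp hn
      have hun : v (u n) = v x := by
        have h1 : v (-(x - u n)) < v x := by rw [hvneg]; linarith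
        have h2 := hsharp x (-(x - u n)) h1
        rwa [show x + -(x - u n) = u n from by ring] at h2
      have hnq : n < q := key n (by rw [hun]; exact hx2)
      have hn0 : 1 ≤ n := by
        by_contra h
        push_neg at h
        have hn' : n = 0 := by omega
        rw [hn', hu0, hv0'] at hun
        linarith
      rw [hWdef, Set.mem_iUnion₂]
      exact ⟨n, by rw [Finset.mem_Ico]; exact ⟨hn0, hnq⟩, x - u n,
        hn, by show x - u n + u n = x; ring⟩
  -- the singleton 0 is null
  have hμ0 : μ {(0:K)} = 0 := by
    have h := hscale {(0:K)}
    have him : (𝔭 * ·) '' {(0:K)} = {(0:K)} := by simp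
    rw [him] at h
    have hfin : μ {(0:K)} ≤ 1 := by
      rw [← hO]
      exact measure_mono (by
        intro x hx
        rw [Set.mem_singleton_iff] at hx
        rw [hx]; exact h0O)
    by_contra h0
    have h2q : (2:ENNReal) ≤ (q:ENNReal) := by exact_mod_cast (by omega : 2 ≤ q)
    have h3 : (q:ENNReal) * μ {(0:K)} = μ {(0:K)} := by
      conv_lhs => rw [h]
      rw [← mul_assoc, ENNReal.mul_inv_cancel hqE0 hqEtop, one_mul]
    have hlt : μ {(0:K)} < 2 * μ {(0:K)} := by
      rw [two_mul]
      exact ENNReal.lt_add_right (ne_top_of_le_ne_top ENNReal.one_ne_top hfin) h0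
    have h4 : (2:ENNReal) * μ {(0:K)} ≤ (q:ENNReal) * μ {(0:K)} := mul_le_mul_left h2q _
    exact lt_irrefl _ (lt_of_lt_of_le hlt (le_trans h4 (le_of_eq h3)))
  refine ⟨⟨?_, ?_⟩, ?_, ?_, hWval⟩
  -- pairwise disjointness of the dilates
  · intro j j' hjj'
    have hempty : ((𝔭 ^ j * ·) '' W) ∩ ((𝔭 ^ j' * ·) '' W) = ∅ := by
      rw [Set.eq_empty_iff_forall_notMem]
      rintro x ⟨⟨w, hw, rfl⟩, ⟨w', hw', hww'⟩⟩
      apply hjj'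
      have h1 : v (𝔭 ^ j * w) = (q:ℝ) ^ (-j) * (q:ℝ) := by rw [hvm, hvzpow, hWval w hw]
      have h2 : v (𝔭 ^ j' * w') = (q:ℝ) ^ (-j') * (q:ℝ) := by rw [hvm, hvzpow, hWval w' hw']
      have hww2 : 𝔭 ^ j' * w' = 𝔭 ^ j * w := hww'
      rw [hww2, h1] at h2
      have h3 : (q:ℝ) ^ (-j) = (q:ℝ) ^ (-j') := mul_right_cancel₀ hqR0.ne' h2
      have h4 := zpow_right_injective₀ hqR0 (ne_of_gt hq1R) h3
      omega
    rw [hempty]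
    exact measure_empty
  -- the dilates cover K up to the null set {0}
  · refine measure_mono_null ?_ hμ0
    intro x hx
    rw [Set.mem_diff] at hx
    rw [Set.mem_singleton_iff]
    by_contra hx0
    apply hx.2
    have hvx : 0 < v x := lt_of_le_of_ne (hvnn x) (Ne.symm (fun h => hx0 ((hv0 x).mp h)))
    obtain ⟨n, hn1, hn2⟩ := exists_mem_Ioc_zpow hvx hq1R
    rw [Set.mem_iUnion]
    refine ⟨-n, 𝔭 ^ n * x, ?_, ?_⟩
    · rw [hWeq, Set.mem_setOf_eq]
      have hv' : v (𝔭 ^ n * x) = (q:ℝ)^(-n) * v x := by rw [hvm, hvzpow]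
      have hpow : (0:ℝ) < (q:ℝ)^(-n) := zpow_pos hqR0 _
      have hcan : (q:ℝ)^(-n) * (q:ℝ)^n = 1 := by
        rw [← zpow_add₀ hqR0.ne', neg_add_cancel, zpow_zero]
      have hcan2 : (q:ℝ)^(-n) * (q:ℝ)^(n+1) = (q:ℝ) := by
        rw [← zpow_add₀ hqR0.ne', show -n + (n+1) = 1 from by ring, zpow_one]
      constructor
      · rw [hv']
        nlinarith [mul_pos hpow (sub_pos.mpr hn1)]
      · rw [hv']
        have := mul_le_mul_of_nonneg_left hn2 hpow.le
        linarith
    · show 𝔭 ^ (-n) * (𝔭 ^ n * x) = x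
      rw [← mul_assoc, ← zpow_add₀ h𝔭0, neg_add_cancel, zpow_zero, one_mul]
  -- translates partition statement
  · intro i hi1 hiq
    constructor
    · intro k k' hkk'
      have hempty : ((· + u k) '' ((· + u i) '' O)) ∩ ((· + u k') '' ((· + u i) '' O)) = ∅ := by
        rw [Set.eq_empty_iff_forall_notMem]
        rintro x ⟨⟨y1, ⟨z1, hz1, rfl⟩, rfl⟩, ⟨y2, ⟨z2, hz2, rfl⟩, hx2⟩⟩
        obtain ⟨m, hm⟩ := hadd i k
        obtain ⟨m', hm'⟩ := hadd i k'
        have h1 : (z1 + u i + u k) - u m ∈ O := by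
          rw [← hm, show z1 + u i + u k - (u i + u k) = z1 from by ring]
          exact hz1
        have hx2' : z2 + u i + u k' = z1 + u i + u k := hx2
        have h2 : (z1 + u i + u k) - u m' ∈ O := by
          rw [← hx2', ← hm', show z2 + u i + u k' - (u i + u k') = z2 from by ring]
          exact hz2
        have hmm : m = m' := (hu _).unique h1 h2
        apply hkk'
        apply huinj
        have h5 : u i + u k = u i + u k' := by rw [hm, hm', hmm]
        exact add_left_cancel h5
      rw [hempty]
      exact measure_empty
    · have hcover : (Set.univ \ ⋃ k : ℕ, (· + u k) '' ((· + u i) '' O)) = ∅ := by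
        rw [Set.diff_eq_empty]
        intro x _
        obtain ⟨n, hn, -⟩ := hu x
        obtain ⟨k, hk, -⟩ := hu (u n - u i)
        obtain ⟨m, hm⟩ := hadd i k
        have hmn : m = n := by
          have h1 : u n - u m ∈ O := by
            rw [← hm, show u n - (u i + u k) = (u n - u i) - u k from by ring]
            exact hk
          have h2 : u n - u n ∈ O := by simpa using h0O
          exact (hu (u n)).unique h1 h2
        rw [Set.mem_iUnion]
        refine ⟨k, (x - u n) + u i, ⟨x - u n, hn, rfl⟩, ?_⟩
        show x - u n + u i + u k = x
        rw [show x - u n + u i + u k = x - u n + (u i + u k) from by ring, hm, hmn]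
        ring
      rw [hcover]
      exact measure_empty
  -- measure of W
  · have hWd : W = {x : K | v x ≤ (q:ℝ)} \ O := by
      rw [hWeq, hOdef]
      ext x
      simp only [Set.mem_setOf_eq, Set.mem_diff, not_le]
      tauto
    have h := measure_inter_add_diff (μ := μ) {x : K | v x ≤ (q:ℝ)} hOmeas
    have hint : {x : K | v x ≤ (q:ℝ)} ∩ O = O := by
      apply Set.inter_eq_right.mpr
      intro x hx
      rw [Set.mem_setOf_eq]
      exact le_trans ((hmemO x).mp hx) (le_of_lt hq1R)
    rw [hint, hO, hball, ← hWd] at h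
    rw [add_comm] at h
    exact ENNReal.eq_sub_of_add_eq ENNReal.one_ne_top h
end
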